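/- Let Γ be a connected weighted undirected graph (nonnegative edge weights, no loops). Then the hitting time of the random walk with transition matrix P = D⁻¹A satisfies H(u,v) = (1/τ) · Σ_{T₁∪T₂ ∈ 𝔽₂, u ∈ T₂, v ∈ T₁} vol(T₂)·ω(T₁∪T₂), where τ is the total weight of spanning trees of Γ, 𝔽₂ the set of (unrooted) spanning 2-forests, vol(T) = Σ_{z∈T} d_z with d_z = Σ_w ω(z,w), and ω(F) = Π_{e∈E(F)} ω(e). -/

import Mathlib

open scoped Classical
open Finset Matrix

set_option linter.unusedSectionVars false
set_option linter.unusedVariables false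
set_option maxHeartbeats 1000000

namespace Paper

variable {V : Type*} [Fintype V] [DecidableEq V]

/-- Out-degree of `u` in the weighted digraph with weight function `ω`. -/
noncomputable def deg (ω : V → V → ℝ) (u : V) : ℝ := ∑ v, ω u v

/-- A weighted digraph is strongly connected if every vertex can reach every other
vertex along edges of positive weight. -/
def StronglyConnected (ω : V → V → ℝ) : Prop :=
  ∀ u v : V, Relation.ReflTransGen (fun a b => 0 < ω a b) u v

/-- The combinatorial Laplacian `L = D - A` of a weighted digraph. -/
noncomputable def lap (ω : V → V → ℝ) : Matrix V V ℝ :=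
  Matrix.of fun u v => (if u = v then deg ω u else 0) - ω u v

/-- The transition probability matrix `P = D⁻¹ A` of the random walk. -/
noncomputable def trans (ω : V → V → ℝ) : Matrix V V ℝ :=
  Matrix.of fun u v => ω u v / deg ω u

/-- `G` is the Moore–Penrose pseudoinverse of `M` (four Penrose conditions). -/
def IsMoorePenrose (M G : Matrix V V ℝ) : Prop :=
  M * G * M = M ∧ G * M * G = G ∧ (M * G)ᵀ = M * G ∧ (G * M)ᵀ = G * M

/-- `v` reaches `r` under iteration of the parent function `f`. -/
def Reaches (f : V → V) (v r : V) : Prop := ∃ k : ℕ, f^[k] v = r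

/-- `f` encodes a spanning in-tree of the weighted digraph `ω` rooted at `r`:
every non-root vertex has its unique out-edge `(v, f v)` an edge of the digraph,
the root is a fixed point, and every vertex reaches the root. -/
def IsInTree (ω : V → V → ℝ) (r : V) (f : V → V) : Prop :=
  f r = r ∧ (∀ v, v ≠ r → 0 < ω v (f v)) ∧ ∀ v, Reaches f v r

/-- The weight of the spanning in-tree encoded by `f` with root `r`. -/
noncomputable def treeWeight (ω : V → V → ℝ) (r : V) (f : V → V) : ℝ :=
  ∏ v ∈ Finset.univ.erase r, ω v (f v)

/-- `τ_r`: total weight of spanning in-trees rooted at `r`. -/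
noncomputable def tau (ω : V → V → ℝ) (r : V) : ℝ :=
  ∑ f ∈ Finset.univ.filter (fun f : V → V => IsInTree ω r f), treeWeight ω r f

/-- `f` encodes a rooted spanning 2-forest with (distinct) roots `r₁`, `r₂`. -/
def IsForest2 (ω : V → V → ℝ) (r₁ r₂ : V) (f : V → V) : Prop :=
  r₁ ≠ r₂ ∧ f r₁ = r₁ ∧ f r₂ = r₂ ∧ (∀ v, v ≠ r₁ → v ≠ r₂ → 0 < ω v (f v)) ∧
    ∀ v, Reaches f v r₁ ∨ Reaches f v r₂

/-- The weight of the rooted spanning 2-forest encoded by `f` with roots `r₁`, `r₂`. -/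
noncomputable def forestWeight (ω : V → V → ℝ) (r₁ r₂ : V) (f : V → V) : ℝ :=
  ∏ v ∈ (Finset.univ.erase r₁).erase r₂, ω v (f v)

/-- The component of the root `b`: vertices reaching `b` under `f`. -/
noncomputable def comp (f : V → V) (b : V) : Finset V :=
  Finset.univ.filter (fun z => Reaches f z b)

/-! ### Undirected weighted graphs, edges as unordered pairs -/

/-- Weighted degree in an undirected weighted graph given by `ωs : Sym2 V → ℝ`. -/
noncomputable def degS (ωs : Sym2 V → ℝ) (u : V) : ℝ := ∑ v, ωs s(u, v)

/-- The volume of an undirected weighted graph. -/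
noncomputable def volS (ωs : Sym2 V → ℝ) : ℝ := ∑ u, degS ωs u

/-- Connectivity of an undirected weighted graph. -/
def ConnectedW (ωs : Sym2 V → ℝ) : Prop :=
  ∀ u v : V, Relation.ReflTransGen (fun a b => 0 < ωs s(a, b)) u v

/-- An edge set `E` is a spanning tree of the weighted undirected graph `ωs`. -/
def IsWTree (ωs : Sym2 V → ℝ) (E : Finset (Sym2 V)) : Prop :=
  (∀ e ∈ E, 0 < ωs e) ∧ (SimpleGraph.fromEdgeSet (E : Set (Sym2 V))).IsAcyclic ∧
    (SimpleGraph.fromEdgeSet (E : Set (Sym2 V))).Connected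

/-- An edge set `E` is a spanning 2-forest of the weighted undirected graph `ωs`
(acyclic, with exactly two connected components). -/
def IsWTwoForest (ωs : Sym2 V → ℝ) (E : Finset (Sym2 V)) : Prop :=
  (∀ e ∈ E, 0 < ωs e) ∧ (SimpleGraph.fromEdgeSet (E : Set (Sym2 V))).IsAcyclic ∧
    Nat.card (SimpleGraph.fromEdgeSet (E : Set (Sym2 V))).ConnectedComponent = 2

/-- The weight of a subgraph given by an edge set. -/
noncomputable def wgt (ωs : Sym2 V → ℝ) (E : Finset (Sym2 V)) : ℝ := ∏ e ∈ E, ωs e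

/-- Total weight of spanning trees of the weighted undirected graph `ωs`. -/
noncomputable def tauW (ωs : Sym2 V → ℝ) : ℝ :=
  ∑ E ∈ Finset.univ.filter (fun E : Finset (Sym2 V) => IsWTree ωs E), wgt ωs E

/-- The combinatorial Laplacian of a weighted undirected graph. -/
noncomputable def lapW (ωs : Sym2 V → ℝ) : Matrix V V ℝ :=
  Matrix.of fun u v => (if u = v then degS ωs u else 0) - ωs s(u, v)

/-! ### Simple graphs -/

/-- An edge set `E` is a spanning tree of the simple graph `G`. -/
def IsSTree (G : SimpleGraph V) (E : Finset (Sym2 V)) : Prop :=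
  (E : Set (Sym2 V)) ⊆ G.edgeSet ∧ (SimpleGraph.fromEdgeSet (E : Set (Sym2 V))).IsAcyclic ∧
    (SimpleGraph.fromEdgeSet (E : Set (Sym2 V))).Connected

/-- An edge set `E` is a spanning 2-forest of the simple graph `G`. -/
def IsSTwoForest (G : SimpleGraph V) (E : Finset (Sym2 V)) : Prop :=
  (E : Set (Sym2 V)) ⊆ G.edgeSet ∧ (SimpleGraph.fromEdgeSet (E : Set (Sym2 V))).IsAcyclic ∧
    Nat.card (SimpleGraph.fromEdgeSet (E : Set (Sym2 V))).ConnectedComponent = 2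

/-- The number of spanning trees of the simple graph `G`. -/
noncomputable def treeCount (G : SimpleGraph V) : ℕ :=
  (Finset.univ.filter (fun E : Finset (Sym2 V) => IsSTree G E)).card





/-- The simple graph on `V` with edge set `E`. -/
noncomputable def Gr (E : Finset (Sym2 V)) : SimpleGraph V :=
  SimpleGraph.fromEdgeSet (E : Set (Sym2 V))

lemma Gr_adj {E : Finset (Sym2 V)} {x y : V} :
    (Gr E).Adj x y ↔ s(x, y) ∈ E ∧ x ≠ y := by
  simp [Gr, SimpleGraph.fromEdgeSet_adj]

lemma reach_mono {E E' : Finset (Sym2 V)} (h : E ⊆ E') {x y : V}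
    (hr : (Gr E).Reachable x y) : (Gr E').Reachable x y :=
  hr.mono (SimpleGraph.fromEdgeSet_mono (by exact_mod_cast h))

lemma acyclic_anti {E E' : Finset (Sym2 V)} (h : E ⊆ E')
    (ha : (Gr E').IsAcyclic) : (Gr E).IsAcyclic := by
  intro x c hc
  exact ha (c.mapLe (SimpleGraph.fromEdgeSet_mono (by exact_mod_cast h))) (hc.mapLe _)

lemma Gr_erase (E : Finset (Sym2 V)) (e : Sym2 V) :
    Gr (E.erase e) = Gr E \ SimpleGraph.fromEdgeSet {e} := by
  ext x y
  simp only [Gr, SimpleGraph.fromEdgeSet_adj, SimpleGraph.sdiff_adj, Finset.coe_erase,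
    Set.mem_diff, Set.mem_singleton_iff, Finset.mem_coe, Finset.mem_erase]
  tauto

lemma reach_erase {E : Finset (Sym2 V)} {a b z x : V}
    (h : (Gr E).Reachable z x) :
    (Gr (E.erase s(a, b))).Reachable z x ∨ (Gr (E.erase s(a, b))).Reachable z a ∨
      (Gr (E.erase s(a, b))).Reachable z b := by
  obtain ⟨p⟩ := h
  induction p with
  | nil => exact Or.inl (SimpleGraph.Reachable.refl _)
  | @cons c d x hadj p ih =>
    by_cases hcd : s(c, d) = s(a, b)
    · rcases Sym2.eq_iff.mp hcd with ⟨rfl, rfl⟩ | ⟨rfl, rfl⟩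
      · exact Or.inr (Or.inl (SimpleGraph.Reachable.refl _))
      · exact Or.inr (Or.inr (SimpleGraph.Reachable.refl _))
    · have hadj' : (Gr (E.erase s(a, b))).Adj c d := by
        rw [Gr_adj] at hadj ⊢
        exact ⟨Finset.mem_erase.mpr ⟨hcd, hadj.1⟩, hadj.2⟩
      rcases ih with h | h | h
      · exact Or.inl (hadj'.reachable.trans h)
      · exact Or.inr (Or.inl (hadj'.reachable.trans h))
      · exact Or.inr (Or.inr (hadj'.reachable.trans h))

lemma reach_of_reach_erase {E : Finset (Sym2 V)} {a b x y : V}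
    (hab : (Gr (E.erase s(a, b))).Reachable a b)
    (h : (Gr E).Reachable x y) : (Gr (E.erase s(a, b))).Reachable x y := by
  obtain ⟨p⟩ := h
  induction p with
  | nil => exact SimpleGraph.Reachable.refl _
  | @cons c d x hadj p ih =>
    by_cases hcd : s(c, d) = s(a, b)
    · rcases Sym2.eq_iff.mp hcd with ⟨rfl, rfl⟩ | ⟨rfl, rfl⟩
      · exact hab.trans ih
      · exact hab.symm.trans ih
    · have hadj' : (Gr (E.erase s(a, b))).Adj c d := by
        rw [Gr_adj] at hadj ⊢
        exact ⟨Finset.mem_erase.mpr ⟨hcd, hadj.1⟩, hadj.2⟩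
      exact hadj'.reachable.trans ih

lemma reach_of_walk_avoid {E : Finset (Sym2 V)} {x y : V}
    (p : (Gr E).Walk x y) (e : Sym2 V) (hp : e ∉ p.edges) :
    (Gr (E.erase e)).Reachable x y := by
  induction p with
  | nil => exact SimpleGraph.Reachable.refl _
  | @cons c d x hadj p ih =>
    rw [SimpleGraph.Walk.edges_cons, List.mem_cons] at hp
    push_neg at hp
    have hadj' : (Gr (E.erase e)).Adj c d := by
      rw [Gr_adj] at hadj ⊢
      exact ⟨Finset.mem_erase.mpr ⟨fun h => hp.1 h.symm, hadj.1⟩, hadj.2⟩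
    exact hadj'.reachable.trans (ih hp.2)






/-- `E` is a spanning 2-forest separating `a` and `b` (with positive edge weights). -/
def Sep (ωs : Sym2 V → ℝ) (a b : V) (E : Finset (Sym2 V)) : Prop :=
  (∀ e ∈ E, 0 < ωs e) ∧ (Gr E).IsAcyclic ∧ ¬ (Gr E).Reachable a b ∧
    ∀ z, (Gr E).Reachable z a ∨ (Gr E).Reachable z b

lemma sep_iff (ωs : Sym2 V → ℝ) {a b : V} (hab : a ≠ b) (E : Finset (Sym2 V)) :
    (IsWTwoForest ωs E ∧ ¬ (Gr E).Reachable a b) ↔ Sep ωs a b E := by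
  constructor
  · rintro ⟨⟨hpos, hac, hcard⟩, hnr⟩
    refine ⟨hpos, hac, hnr, ?_⟩
    obtain ⟨x, y, hxy, huniv⟩ := Nat.card_eq_two_iff.mp hcard
    intro z
    have hmem : ∀ c : (Gr E).ConnectedComponent, c = x ∨ c = y := by
      intro c
      have : c ∈ ({x, y} : Set (Gr E).ConnectedComponent) := huniv ▸ Set.mem_univ c
      exact this
    have hab' : (Gr E).connectedComponentMk a ≠ (Gr E).connectedComponentMk b := by
      rw [Ne, SimpleGraph.ConnectedComponent.eq]; exact hnr
    have hz := hmem ((Gr E).connectedComponentMk z)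
    have ha := hmem ((Gr E).connectedComponentMk a)
    have hb := hmem ((Gr E).connectedComponentMk b)
    have : (Gr E).connectedComponentMk z = (Gr E).connectedComponentMk a ∨
        (Gr E).connectedComponentMk z = (Gr E).connectedComponentMk b := by
      rcases ha with ha | ha <;> rcases hb with hb | hb <;> rcases hz with hz | hz <;>
        simp_all <;> tauto
    rcases this with h | h
    · exact Or.inl (SimpleGraph.ConnectedComponent.eq.mp h)
    · exact Or.inr (SimpleGraph.ConnectedComponent.eq.mp h)
  · rintro ⟨hpos, hac, hnr, hall⟩
    refine ⟨⟨hpos, hac, ?_⟩, hnr⟩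
    rw [Nat.card_eq_two_iff]
    refine ⟨(Gr E).connectedComponentMk a, (Gr E).connectedComponentMk b, ?_, ?_⟩
    · intro h; exact hnr (SimpleGraph.ConnectedComponent.eq.mp h)
    · apply Set.eq_univ_of_forall
      intro c
      induction c using SimpleGraph.ConnectedComponent.ind with
      | _ z =>
        rcases hall z with h | h
        · exact Or.inl (SimpleGraph.ConnectedComponent.eq.mpr h)
        · exact Or.inr (SimpleGraph.ConnectedComponent.eq.mpr h)

/-- Adding an edge from `u` to a vertex `w` of the other component of a separating
2-forest yields a spanning tree. -/
lemma tree_insert {ωs : Sym2 V → ℝ} {u v w : V} {E : Finset (Sym2 V)}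
    (hE : Sep ωs u v E) (hwv : (Gr E).Reachable w v) (hw : 0 < ωs s(u, w)) :
    IsWTree ωs (insert s(u, w) E) := by
  obtain ⟨hpos, hac, hnr, hall⟩ := hE
  have huw : u ≠ w := by
    rintro rfl; exact hnr hwv
  have hnotmem : s(u, w) ∉ E := by
    intro hmem
    exact hnr ((Gr_adj.mpr ⟨hmem, huw⟩).reachable.trans hwv)
  have herase : (insert s(u, w) E).erase s(u, w) = E := Finset.erase_insert hnotmem
  refine ⟨?_, ?_, ?_⟩
  · intro e he
    rcases Finset.mem_insert.mp he with rfl | he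
    · exact hw
    · exact hpos e he
  · -- acyclicity
    intro x c hc
    by_cases hec : s(u, w) ∈ c.edges
    · have := SimpleGraph.adj_and_reachable_delete_edges_iff_exists_cycle.mpr ⟨x, c, hc, hec⟩
      have hreach : (Gr E).Reachable u w := by
        have h2 : (Gr ((insert s(u, w) E).erase s(u, w))).Reachable u w := by
          rw [Gr_erase]; exact this.2
        rwa [herase] at h2
      exact hnr (hreach.trans hwv)
    · -- transfer cycle to Gr E
      have hsub : ∀ e ∈ c.edges, e ∈ (Gr E).edgeSet := by
        intro e he
        have := c.edges_subset_edgeSet he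
        unfold Gr
        rw [SimpleGraph.edgeSet_fromEdgeSet] at this ⊢
        refine ⟨?_, this.2⟩
        rcases Finset.mem_insert.mp (by exact_mod_cast this.1) with rfl | h
        · exact absurd he hec
        · exact_mod_cast h
      exact hac (c.transfer (Gr E) hsub) (hc.transfer hsub)
  · -- connectedness
    have hle : (Gr E) ≤ Gr (insert s(u, w) E) :=
      SimpleGraph.fromEdgeSet_mono (by exact_mod_cast Finset.subset_insert _ _)
    have hadj : (Gr (insert s(u, w) E)).Adj u w :=
      Gr_adj.mpr ⟨Finset.mem_insert_self _ _, huw⟩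
    have hreachu : ∀ z, (Gr (insert s(u, w) E)).Reachable z u := by
      intro z
      rcases hall z with h | h
      · exact h.mono hle
      · exact ((h.mono hle).trans ((hwv.mono hle).symm)).trans hadj.symm.reachable
    have : Nonempty V := ⟨u⟩
    exact ⟨fun x y => (hreachu x).trans (hreachu y).symm⟩

/-- Removing an edge of a spanning tree gives a separating structure. -/
lemma tree_erase {ωs : Sym2 V → ℝ} {u w : V} {T : Finset (Sym2 V)}
    (hT : IsWTree ωs T) (he : s(u, w) ∈ T) (huw : u ≠ w) :
    (Gr (T.erase s(u, w))).IsAcyclic ∧ ¬ (Gr (T.erase s(u, w))).Reachable u w ∧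
      ∀ z, (Gr (T.erase s(u, w))).Reachable z u ∨ (Gr (T.erase s(u, w))).Reachable z w := by
  obtain ⟨hpos, hac, hconn⟩ := hT
  have hadj : (Gr T).Adj u w := Gr_adj.mpr ⟨he, huw⟩
  have hbridge := (SimpleGraph.isAcyclic_iff_forall_adj_isBridge.mp hac) hadj
  rw [SimpleGraph.isBridge_iff] at hbridge
  constructor
  · exact acyclic_anti (Finset.erase_subset _ _) hac
  constructor
  · rw [Gr_erase]; exact hbridge
  · intro z
    have hzu : (Gr T).Reachable z u := hconn.preconnected z u
    rcases reach_erase (a := u) (b := w) hzu with h | h | h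
    · exact Or.inl h
    · exact Or.inl h
    · exact Or.inr h






section PerTree

variable {ωs : Sym2 V → ℝ} {u v : V} {T : Finset (Sym2 V)}

/-- The branch of the tree `T` through the neighbor `w` of `u`. -/
noncomputable def branch (u : V) (T : Finset (Sym2 V)) (w : V) : Finset V :=
  Finset.univ.filter (fun z => (Gr (T.erase s(u, w))).Reachable z w)

lemma branch_ne (hT : IsWTree ωs T) (hloop : ∀ x : V, ωs s(x, x) = 0)
    {w : V} (hw : s(u, w) ∈ T) : u ≠ w := by
  rintro rfl
  exact absurd (hloop u ▸ hT.1 _ hw) (lt_irrefl 0)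

lemma branch_disjoint (hT : IsWTree ωs T) (hloop : ∀ x : V, ωs s(x, x) = 0)
    {w w' : V} (hw : s(u, w) ∈ T) (hw' : s(u, w') ∈ T) (hne : w ≠ w') :
    Disjoint (branch u T w) (branch u T w') := by
  have huw := branch_ne hT hloop hw
  have huw' := branch_ne hT hloop hw'
  rw [Finset.disjoint_left]
  intro z hz hz'
  rw [branch, Finset.mem_filter] at hz hz'
  obtain ⟨p⟩ := hz'.2
  by_cases hu : u ∈ p.support
  · -- then u reaches w' in T minus s(u,w'), contradiction
    have h1 : (Gr (T.erase s(u, w'))).Reachable z u := ⟨p.takeUntil u hu⟩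
    exact (tree_erase hT hw' huw').2.1 (h1.symm.trans ⟨p⟩)
  · have hedge : s(u, w) ∉ p.edges := fun h => hu (p.fst_mem_support_of_mem_edges h)
    have h2 : (Gr ((T.erase s(u, w')).erase s(u, w))).Reachable z w' :=
      reach_of_walk_avoid p s(u, w) hedge
    have h3 : (Gr (T.erase s(u, w))).Reachable z w' := by
      refine reach_mono ?_ h2
      intro x hx
      rw [Finset.mem_erase] at hx ⊢
      exact ⟨hx.1, (Finset.mem_erase.mp hx.2).2⟩
    have hadj : (Gr (T.erase s(u, w))).Adj u w' := by
      rw [Gr_adj]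
      refine ⟨Finset.mem_erase.mpr ⟨?_, hw'⟩, huw'⟩
      intro h
      rcases Sym2.eq_iff.mp h with ⟨-, h2⟩ | ⟨h1, -⟩
      · exact hne h2.symm
      · exact huw h1
    have hzu : (Gr (T.erase s(u, w))).Reachable z u := h3.trans hadj.symm.reachable
    exact (tree_erase hT hw huw).2.1 (hzu.symm.trans hz.2)

lemma branch_not_mem_u (hT : IsWTree ωs T) (hloop : ∀ x : V, ωs s(x, x) = 0)
    {w : V} (hw : s(u, w) ∈ T) : u ∉ branch u T w := by
  have huw := branch_ne hT hloop hw
  rw [branch, Finset.mem_filter]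
  rintro ⟨-, h⟩
  exact (tree_erase hT hw huw).2.1 h

lemma branch_cover (hT : IsWTree ωs T) {z : V} (hz : z ≠ u) :
    ∃ w, s(u, w) ∈ T ∧ z ∈ branch u T w := by
  have hreach : (Gr T).Reachable u z := hT.2.2.preconnected u z
  obtain ⟨p0⟩ := hreach
  obtain ⟨p, hp⟩ : ∃ p : (Gr T).Walk u z, p.IsPath := ⟨p0.toPath.1, p0.toPath.2⟩
  cases p with
  | nil => exact absurd rfl hz
  | @cons _ w _ hadj p' =>
    have hp' : p'.IsPath ∧ u ∉ p'.support :=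
      (SimpleGraph.Walk.cons_isPath_iff hadj p').mp hp
    refine ⟨w, (Gr_adj.mp hadj).1, ?_⟩
    rw [branch, Finset.mem_filter]
    refine ⟨Finset.mem_univ _, ?_⟩
    have hedge : s(u, w) ∉ p'.reverse.edges := by
      rw [SimpleGraph.Walk.edges_reverse, List.mem_reverse]
      intro h
      exact hp'.2 (p'.fst_mem_support_of_mem_edges h)
    exact reach_of_walk_avoid p'.reverse s(u, w) hedge

lemma univ_eq_branches (hT : IsWTree ωs T) (hloop : ∀ x : V, ωs s(x, x) = 0) :
    (Finset.univ : Finset V) =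
      insert u ((Finset.univ.filter (fun w => s(u, w) ∈ T)).biUnion (branch u T)) := by
  ext z
  rw [Finset.mem_insert, Finset.mem_biUnion]
  constructor
  · intro _
    by_cases hz : z = u
    · exact Or.inl hz
    · obtain ⟨w, hw, hzw⟩ := branch_cover hT hz
      exact Or.inr ⟨w, Finset.mem_filter.mpr ⟨Finset.mem_univ _, hw⟩, hzw⟩
  · intro _
    exact Finset.mem_univ _

lemma vol_branches (hT : IsWTree ωs T) (hloop : ∀ x : V, ωs s(x, x) = 0) :
    ∑ z, degS ωs z = degS ωs u +
      ∑ w ∈ Finset.univ.filter (fun w => s(u, w) ∈ T), ∑ z ∈ branch u T w, degS ωs z := by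
  conv_lhs => rw [univ_eq_branches (u := u) hT hloop]
  rw [Finset.sum_insert, Finset.sum_biUnion]
  · intro w hw w' hw' hne
    exact branch_disjoint hT hloop (Finset.mem_filter.mp hw).2 (Finset.mem_filter.mp hw').2 hne
  · rw [Finset.mem_biUnion]
    rintro ⟨w, hw, hmem⟩
    exact branch_not_mem_u hT hloop (Finset.mem_filter.mp hw).2 hmem

/-- The branch/complement dichotomy: the complement of a branch is the `u`-side. -/
lemma u_side_eq (hT : IsWTree ωs T) (hloop : ∀ x : V, ωs s(x, x) = 0)
    {w : V} (hw : s(u, w) ∈ T) :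
    Finset.univ.filter (fun z => (Gr (T.erase s(u, w))).Reachable z u) =
      Finset.univ \ branch u T w := by
  have huw := branch_ne hT hloop hw
  have h := tree_erase hT hw huw
  ext z
  constructor
  · intro hzu
    rw [Finset.mem_filter] at hzu
    rw [Finset.mem_sdiff]
    refine ⟨Finset.mem_univ _, fun hmem => ?_⟩
    rw [branch, Finset.mem_filter] at hmem
    exact h.2.1 (hzu.2.symm.trans hmem.2)
  · intro hmem
    rw [Finset.mem_sdiff] at hmem
    rw [Finset.mem_filter]
    refine ⟨Finset.mem_univ _, ?_⟩
    rcases h.2.2 z with h' | h'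
    · exact h'
    · exact absurd (by rw [branch, Finset.mem_filter]; exact ⟨Finset.mem_univ _, h'⟩) hmem.2

/-- The key per-tree identity. -/
lemma tree_identity (hT : IsWTree ωs T) (hloop : ∀ x : V, ωs s(x, x) = 0)
    (huv : u ≠ v) :
    (∑ w ∈ Finset.univ.filter (fun w => s(u, w) ∈ T ∧
        (Gr (T.erase s(u, w))).Reachable w v),
      ∑ z ∈ Finset.univ.filter (fun z => (Gr (T.erase s(u, w))).Reachable z u), degS ωs z)
    - (∑ w ∈ Finset.univ.filter (fun w => s(u, w) ∈ T ∧
        (Gr (T.erase s(u, w))).Reachable u v),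
      ∑ z ∈ Finset.univ.filter (fun z => (Gr (T.erase s(u, w))).Reachable z w), degS ωs z)
    = degS ωs u := by
  set N : Finset V := Finset.univ.filter (fun w => s(u, w) ∈ T) with hN
  -- the unique branch containing v
  obtain ⟨w₀, hw₀T, hvw₀⟩ := branch_cover (u := u) hT huv.symm
  have hvw₀' : (Gr (T.erase s(u, w₀))).Reachable v w₀ := by
    rw [branch, Finset.mem_filter] at hvw₀; exact hvw₀.2
  -- first filter is {w₀}
  have hN₁ : Finset.univ.filter (fun w => s(u, w) ∈ T ∧
      (Gr (T.erase s(u, w))).Reachable w v) = {w₀} := by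
    ext w
    simp only [Finset.mem_filter, Finset.mem_univ, true_and, Finset.mem_singleton]
    constructor
    · rintro ⟨hwT, hwv⟩
      by_contra hne
      have hvw : v ∈ branch u T w := by
        rw [branch, Finset.mem_filter]
        exact ⟨Finset.mem_univ _, hwv.symm⟩
      exact (Finset.disjoint_left.mp (branch_disjoint hT hloop hwT hw₀T hne)) hvw hvw₀
    · rintro rfl
      exact ⟨hw₀T, hvw₀'.symm⟩
  -- second filter is N erase w₀
  have hN₂ : Finset.univ.filter (fun w => s(u, w) ∈ T ∧
      (Gr (T.erase s(u, w))).Reachable u v) = N.erase w₀ := by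
    ext w
    rw [Finset.mem_filter, Finset.mem_erase]
    constructor
    · rintro ⟨-, hwT, huv'⟩
      refine ⟨?_, Finset.mem_filter.mpr ⟨Finset.mem_univ _, hwT⟩⟩
      rintro rfl
      exact (tree_erase hT hwT (branch_ne hT hloop hwT)).2.1 (huv'.trans hvw₀')
    · rintro ⟨hne, hmem⟩
      have hwT := (Finset.mem_filter.mp hmem).2
      refine ⟨Finset.mem_univ _, hwT, ?_⟩
      rcases (tree_erase hT hwT (branch_ne hT hloop hwT)).2.2 v with h | h
      · exact h.symm
      · exfalso
        have : v ∈ branch u T w := by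
          rw [branch, Finset.mem_filter]; exact ⟨Finset.mem_univ _, h⟩
        exact (Finset.disjoint_left.mp (branch_disjoint hT hloop hwT hw₀T hne)) this hvw₀
  rw [hN₁, hN₂, Finset.sum_singleton]
  have hu_side : ∑ z ∈ Finset.univ.filter
      (fun z => (Gr (T.erase s(u, w₀))).Reachable z u), degS ωs z
      = (∑ z, degS ωs z) - ∑ z ∈ branch u T w₀, degS ωs z := by
    rw [u_side_eq hT hloop hw₀T, eq_sub_iff_add_eq,
      Finset.sum_sdiff (Finset.subset_univ _)]
  have herase_sum : ∑ w ∈ N.erase w₀,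
      (∑ z ∈ Finset.univ.filter
        (fun z => (Gr (T.erase s(u, w))).Reachable z w), degS ωs z)
      = (∑ w ∈ N, ∑ z ∈ branch u T w, degS ωs z) - ∑ z ∈ branch u T w₀, degS ωs z := by
    have hmem : w₀ ∈ N := Finset.mem_filter.mpr ⟨Finset.mem_univ _, hw₀T⟩
    rw [eq_sub_iff_add_eq, ← Finset.sum_erase_add N _ hmem]
    rfl
  rw [hu_side, herase_sum]
  have hvol := vol_branches (u := u) hT hloop
  rw [hvol]
  ring

end PerTree






noncomputable def volA (ωs : Sym2 V → ℝ) (E : Finset (Sym2 V)) (x : V) : ℝ :=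
  ∑ z ∈ Finset.univ.filter (fun z => (Gr E).Reachable z x), degS ωs z


noncomputable def Sval (ωs : Sym2 V → ℝ) (v x : V) : ℝ :=
  ∑ E ∈ Finset.univ.filter (fun E => Sep ωs x v E), volA ωs E x * wgt ωs E


section Bij

variable {ωs : Sym2 V → ℝ} {u v : V}

lemma bij_B (hnn : ∀ e, 0 ≤ ωs e) (hloop : ∀ x : V, ωs s(x, x) = 0) (w : V) :
    ωs s(u, w) * ∑ E ∈ Finset.univ.filter
        (fun E => Sep ωs u v E ∧ (Gr E).Reachable w v), volA ωs E u * wgt ωs E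
    = ∑ T ∈ Finset.univ.filter (fun T => IsWTree ωs T ∧ s(u, w) ∈ T ∧
        (Gr (T.erase s(u, w))).Reachable w v), volA ωs (T.erase s(u, w)) u * wgt ωs T := by
  by_cases hpos : 0 < ωs s(u, w)
  · rw [Finset.mul_sum]
    refine Finset.sum_nbij' (fun E => insert s(u, w) E) (fun T => T.erase s(u, w))
      ?_ ?_ ?_ ?_ ?_
    · -- forward membership
      intro E hE
      rw [Finset.mem_filter] at hE ⊢
      obtain ⟨-, hsep, hwv⟩ := hE
      have hnotmem : s(u, w) ∉ E := by
        intro hmem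
        have huw : u ≠ w := fun h => hsep.2.2.1 (h ▸ hwv)
        exact hsep.2.2.1 ((Gr_adj.mpr ⟨hmem, huw⟩).reachable.trans hwv)
      refine ⟨Finset.mem_univ _, tree_insert hsep hwv hpos, Finset.mem_insert_self _ _, ?_⟩
      rwa [Finset.erase_insert hnotmem]
    · -- backward membership
      intro T hT
      rw [Finset.mem_filter] at hT ⊢
      obtain ⟨-, htree, hmem, hwv⟩ := hT
      have huw : u ≠ w := branch_ne htree hloop hmem
      have hTE := tree_erase htree hmem huw
      refine ⟨Finset.mem_univ _, ⟨fun e he => htree.1 e (Finset.mem_of_mem_erase he),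
        hTE.1, ?_, ?_⟩, hwv⟩
      · intro huv'
        exact hTE.2.1 (huv'.trans hwv.symm)
      · intro z
        rcases hTE.2.2 z with h | h
        · exact Or.inl h
        · exact Or.inr (h.trans hwv)
    · intro E hE
      rw [Finset.mem_filter] at hE
      obtain ⟨-, hsep, hwv⟩ := hE
      have hnotmem : s(u, w) ∉ E := by
        intro hmem
        have huw : u ≠ w := fun h => hsep.2.2.1 (h ▸ hwv)
        exact hsep.2.2.1 ((Gr_adj.mpr ⟨hmem, huw⟩).reachable.trans hwv)
      exact Finset.erase_insert hnotmem
    · intro T hT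
      rw [Finset.mem_filter] at hT
      exact Finset.insert_erase hT.2.2.1
    · intro E hE
      rw [Finset.mem_filter] at hE
      obtain ⟨-, hsep, hwv⟩ := hE
      have hnotmem : s(u, w) ∉ E := by
        intro hmem
        have huw : u ≠ w := fun h => hsep.2.2.1 (h ▸ hwv)
        exact hsep.2.2.1 ((Gr_adj.mpr ⟨hmem, huw⟩).reachable.trans hwv)
      simp only [wgt]
      rw [Finset.erase_insert hnotmem, Finset.prod_insert hnotmem]
      ring
  · have hz : ωs s(u, w) = 0 := le_antisymm (not_lt.mp hpos) (hnn _)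
    have hempty : Finset.univ.filter (fun T => IsWTree ωs T ∧ s(u, w) ∈ T ∧
        (Gr (T.erase s(u, w))).Reachable w v) = ∅ := by
      apply Finset.eq_empty_of_forall_notMem
      intro T hT
      rw [Finset.mem_filter] at hT
      exact hpos (hT.2.1.1 _ hT.2.2.1)
    rw [hz, hempty, Finset.sum_empty, zero_mul]

lemma bij_D (hnn : ∀ e, 0 ≤ ωs e) (hloop : ∀ x : V, ωs s(x, x) = 0) (w : V) :
    ωs s(u, w) * ∑ E ∈ Finset.univ.filter
        (fun E => Sep ωs w v E ∧ (Gr E).Reachable u v), volA ωs E w * wgt ωs E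
    = ∑ T ∈ Finset.univ.filter (fun T => IsWTree ωs T ∧ s(u, w) ∈ T ∧
        (Gr (T.erase s(u, w))).Reachable u v), volA ωs (T.erase s(u, w)) w * wgt ωs T := by
  by_cases hpos : 0 < ωs s(u, w)
  · rw [Finset.mul_sum]
    have key : ∀ E, Sep ωs w v E → (Gr E).Reachable u v → s(u, w) ∉ E := by
      intro E hsep huv' hmem
      have huw : u ≠ w := by
        rintro rfl
        exact hsep.2.2.1 huv'
      exact hsep.2.2.1 (((Gr_adj.mpr ⟨hmem, huw⟩).reachable.symm).trans huv')
    refine Finset.sum_nbij' (fun E => insert s(u, w) E) (fun T => T.erase s(u, w))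
      ?_ ?_ ?_ ?_ ?_
    · intro E hE
      rw [Finset.mem_filter] at hE ⊢
      obtain ⟨-, hsep, huv'⟩ := hE
      have htree : IsWTree ωs (insert s(u, w) E) := by
        have : s(u, w) = s(w, u) := Sym2.eq_swap
        rw [this]
        exact tree_insert hsep huv' (this ▸ hpos)
      refine ⟨Finset.mem_univ _, htree, Finset.mem_insert_self _ _, ?_⟩
      rwa [Finset.erase_insert (key E hsep huv')]
    · intro T hT
      rw [Finset.mem_filter] at hT ⊢
      obtain ⟨-, htree, hmem, huv'⟩ := hT
      have huw : u ≠ w := branch_ne htree hloop hmem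
      have hTE := tree_erase htree hmem huw
      refine ⟨Finset.mem_univ _, ⟨fun e he => htree.1 e (Finset.mem_of_mem_erase he),
        hTE.1, ?_, ?_⟩, huv'⟩
      · intro hwv'
        exact hTE.2.1 (huv'.trans hwv'.symm)
      · intro z
        rcases hTE.2.2 z with h | h
        · exact Or.inr (h.trans huv')
        · exact Or.inl h
    · intro E hE
      rw [Finset.mem_filter] at hE
      exact Finset.erase_insert (key E hE.2.1 hE.2.2)
    · intro T hT
      rw [Finset.mem_filter] at hT
      exact Finset.insert_erase hT.2.2.1
    · intro E hE
      rw [Finset.mem_filter] at hE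
      have hnotmem := key E hE.2.1 hE.2.2
      simp only [wgt]
      rw [Finset.erase_insert hnotmem, Finset.prod_insert hnotmem]
      ring
  · have hz : ωs s(u, w) = 0 := le_antisymm (not_lt.mp hpos) (hnn _)
    have hempty : Finset.univ.filter (fun T => IsWTree ωs T ∧ s(u, w) ∈ T ∧
        (Gr (T.erase s(u, w))).Reachable u v) = ∅ := by
      apply Finset.eq_empty_of_forall_notMem
      intro T hT
      rw [Finset.mem_filter] at hT
      exact hpos (hT.2.1.1 _ hT.2.2.1)
    rw [hz, hempty, Finset.sum_empty, zero_mul]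

lemma AC_eq (w : V) :
    ∑ E ∈ Finset.univ.filter (fun E => Sep ωs u v E ∧ (Gr E).Reachable w u),
      volA ωs E u * wgt ωs E
    = ∑ E ∈ Finset.univ.filter (fun E => Sep ωs w v E ∧ (Gr E).Reachable u w),
      volA ωs E w * wgt ωs E := by
  have hfilter : Finset.univ.filter (fun E => Sep ωs u v E ∧ (Gr E).Reachable w u)
      = Finset.univ.filter (fun E => Sep ωs w v E ∧ (Gr E).Reachable u w) := by
    ext E
    rw [Finset.mem_filter, Finset.mem_filter]
    constructor
    · rintro ⟨hu', ⟨hpos, hac, hnr, hall⟩, hwu⟩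
      refine ⟨hu', ⟨hpos, hac, fun hwv => hnr (hwu.symm.trans hwv), fun z => ?_⟩, hwu.symm⟩
      rcases hall z with h | h
      · exact Or.inl (h.trans hwu.symm)
      · exact Or.inr h
    · rintro ⟨hu', ⟨hpos, hac, hnr, hall⟩, huw⟩
      refine ⟨hu', ⟨hpos, hac, fun huv' => hnr (huw.symm.trans huv'), fun z => ?_⟩, huw.symm⟩
      rcases hall z with h | h
      · exact Or.inl (h.trans huw.symm)
      · exact Or.inr h
  rw [hfilter]
  apply Finset.sum_congr rfl
  intro E hE
  rw [Finset.mem_filter] at hE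
  have huw : (Gr E).Reachable u w := hE.2.2
  have : volA ωs E u = volA ωs E w := by
    unfold volA
    congr 1
    ext z
    rw [Finset.mem_filter, Finset.mem_filter]
    exact ⟨fun ⟨h1, h2⟩ => ⟨h1, h2.trans huw⟩, fun ⟨h1, h2⟩ => ⟨h1, h2.trans huw.symm⟩⟩
  rw [this]

end Bij






lemma swap_helper (P : Finset (Sym2 V) → Prop) (Q : V → Finset (Sym2 V) → Prop)
    (hQ : ∀ w T, Q w T → P T) (g : V → Finset (Sym2 V) → ℝ) :
    ∑ w, ∑ T ∈ Finset.univ.filter (fun T => Q w T), g w T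
    = ∑ T ∈ Finset.univ.filter (fun T => P T),
        ∑ w ∈ Finset.univ.filter (fun w => Q w T), g w T := by
  have hfil : ∀ w : V, Finset.univ.filter (fun T => Q w T)
      = (Finset.univ.filter (fun T => P T)).filter (fun T => Q w T) := by
    intro w
    rw [Finset.filter_filter]
    apply Finset.filter_congr
    intro T _
    exact ⟨fun h => ⟨hQ w T h, h⟩, fun h => h.2⟩
  calc ∑ w, ∑ T ∈ Finset.univ.filter (fun T => Q w T), g w T
      = ∑ w, ∑ T ∈ Finset.univ.filter (fun T => P T), if Q w T then g w T else 0 := by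
        refine Finset.sum_congr rfl fun w _ => ?_
        rw [hfil w, Finset.sum_filter]
    _ = ∑ T ∈ Finset.univ.filter (fun T => P T), ∑ w, if Q w T then g w T else 0 :=
        Finset.sum_comm
    _ = ∑ T ∈ Finset.univ.filter (fun T => P T),
          ∑ w ∈ Finset.univ.filter (fun w => Q w T), g w T := by
        refine Finset.sum_congr rfl fun T _ => ?_
        rw [Finset.sum_filter]

variable {ωs : Sym2 V → ℝ} {u v : V}

lemma tree_double_sum (hloop : ∀ x : V, ωs s(x, x) = 0) (huv : u ≠ v) :
    (∑ w, ∑ T ∈ Finset.univ.filter (fun T => IsWTree ωs T ∧ s(u, w) ∈ T ∧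
        (Gr (T.erase s(u, w))).Reachable w v), volA ωs (T.erase s(u, w)) u * wgt ωs T)
    - (∑ w, ∑ T ∈ Finset.univ.filter (fun T => IsWTree ωs T ∧ s(u, w) ∈ T ∧
        (Gr (T.erase s(u, w))).Reachable u v), volA ωs (T.erase s(u, w)) w * wgt ωs T)
    = degS ωs u * tauW ωs := by
  have e1 : (∑ w, ∑ T ∈ Finset.univ.filter (fun T => IsWTree ωs T ∧ s(u, w) ∈ T ∧ (Gr (T.erase s(u, w))).Reachable w v), volA ωs (T.erase s(u, w)) u * wgt ωs T)
      = ∑ T ∈ Finset.univ.filter (fun T : Finset (Sym2 V) => IsWTree ωs T),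
          ∑ w ∈ Finset.univ.filter (fun w => IsWTree ωs T ∧ s(u, w) ∈ T ∧ (Gr (T.erase s(u, w))).Reachable w v), volA ωs (T.erase s(u, w)) u * wgt ωs T := by
    calc ∑ w, ∑ T ∈ Finset.univ.filter (fun T => IsWTree ωs T ∧ s(u, w) ∈ T ∧ (Gr (T.erase s(u, w))).Reachable w v), volA ωs (T.erase s(u, w)) u * wgt ωs T
        = ∑ w, ∑ T : Finset (Sym2 V), if IsWTree ωs T ∧ s(u, w) ∈ T ∧ (Gr (T.erase s(u, w))).Reachable w v then volA ωs (T.erase s(u, w)) u * wgt ωs T else 0 := by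
          refine Finset.sum_congr rfl fun w _ => ?_
          exact Finset.sum_filter _ _
      _ = ∑ T : Finset (Sym2 V), ∑ w, if IsWTree ωs T ∧ s(u, w) ∈ T ∧ (Gr (T.erase s(u, w))).Reachable w v then volA ωs (T.erase s(u, w)) u * wgt ωs T else 0 := Finset.sum_comm
      _ = ∑ T ∈ Finset.univ.filter (fun T : Finset (Sym2 V) => IsWTree ωs T),
            ∑ w, if IsWTree ωs T ∧ s(u, w) ∈ T ∧ (Gr (T.erase s(u, w))).Reachable w v then volA ωs (T.erase s(u, w)) u * wgt ωs T else 0 := by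
          symm
          apply Finset.sum_subset (Finset.filter_subset _ _)
          intro T _ hT
          rw [Finset.mem_filter, not_and] at hT
          have hT' : ¬ IsWTree ωs T := hT (Finset.mem_univ _)
          apply Finset.sum_eq_zero
          intro w _
          rw [if_neg]
          rintro ⟨h, -⟩
          exact hT' h
      _ = ∑ T ∈ Finset.univ.filter (fun T : Finset (Sym2 V) => IsWTree ωs T),
            ∑ w ∈ Finset.univ.filter (fun w => IsWTree ωs T ∧ s(u, w) ∈ T ∧ (Gr (T.erase s(u, w))).Reachable w v), volA ωs (T.erase s(u, w)) u * wgt ωs T := by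
          refine Finset.sum_congr rfl fun T _ => ?_
          exact (Finset.sum_filter _ _).symm
  have e2 : (∑ w, ∑ T ∈ Finset.univ.filter (fun T => IsWTree ωs T ∧ s(u, w) ∈ T ∧ (Gr (T.erase s(u, w))).Reachable u v), volA ωs (T.erase s(u, w)) w * wgt ωs T)
      = ∑ T ∈ Finset.univ.filter (fun T : Finset (Sym2 V) => IsWTree ωs T),
          ∑ w ∈ Finset.univ.filter (fun w => IsWTree ωs T ∧ s(u, w) ∈ T ∧ (Gr (T.erase s(u, w))).Reachable u v), volA ωs (T.erase s(u, w)) w * wgt ωs T := by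
    calc ∑ w, ∑ T ∈ Finset.univ.filter (fun T => IsWTree ωs T ∧ s(u, w) ∈ T ∧ (Gr (T.erase s(u, w))).Reachable u v), volA ωs (T.erase s(u, w)) w * wgt ωs T
        = ∑ w, ∑ T : Finset (Sym2 V), if IsWTree ωs T ∧ s(u, w) ∈ T ∧ (Gr (T.erase s(u, w))).Reachable u v then volA ωs (T.erase s(u, w)) w * wgt ωs T else 0 := by
          refine Finset.sum_congr rfl fun w _ => ?_
          exact Finset.sum_filter _ _
      _ = ∑ T : Finset (Sym2 V), ∑ w, if IsWTree ωs T ∧ s(u, w) ∈ T ∧ (Gr (T.erase s(u, w))).Reachable u v then volA ωs (T.erase s(u, w)) w * wgt ωs T else 0 := Finset.sum_comm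
      _ = ∑ T ∈ Finset.univ.filter (fun T : Finset (Sym2 V) => IsWTree ωs T),
            ∑ w, if IsWTree ωs T ∧ s(u, w) ∈ T ∧ (Gr (T.erase s(u, w))).Reachable u v then volA ωs (T.erase s(u, w)) w * wgt ωs T else 0 := by
          symm
          apply Finset.sum_subset (Finset.filter_subset _ _)
          intro T _ hT
          rw [Finset.mem_filter, not_and] at hT
          have hT' : ¬ IsWTree ωs T := hT (Finset.mem_univ _)
          apply Finset.sum_eq_zero
          intro w _
          rw [if_neg]
          rintro ⟨h, -⟩
          exact hT' h
      _ = ∑ T ∈ Finset.univ.filter (fun T : Finset (Sym2 V) => IsWTree ωs T),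
            ∑ w ∈ Finset.univ.filter (fun w => IsWTree ωs T ∧ s(u, w) ∈ T ∧ (Gr (T.erase s(u, w))).Reachable u v), volA ωs (T.erase s(u, w)) w * wgt ωs T := by
          refine Finset.sum_congr rfl fun T _ => ?_
          exact (Finset.sum_filter _ _).symm
  rw [e1, e2, ← Finset.sum_sub_distrib]
  have hper : ∀ T ∈ Finset.univ.filter (fun T : Finset (Sym2 V) => IsWTree ωs T),
      (∑ w ∈ Finset.univ.filter (fun w => IsWTree ωs T ∧ s(u, w) ∈ T ∧
          (Gr (T.erase s(u, w))).Reachable w v), volA ωs (T.erase s(u, w)) u * wgt ωs T)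
      - (∑ w ∈ Finset.univ.filter (fun w => IsWTree ωs T ∧ s(u, w) ∈ T ∧
          (Gr (T.erase s(u, w))).Reachable u v), volA ωs (T.erase s(u, w)) w * wgt ωs T)
      = degS ωs u * wgt ωs T := by
    intro T hT
    have hT' : IsWTree ωs T := (Finset.mem_filter.mp hT).2
    have hf1 : Finset.univ.filter (fun w => IsWTree ωs T ∧ s(u, w) ∈ T ∧
        (Gr (T.erase s(u, w))).Reachable w v)
        = Finset.univ.filter (fun w => s(u, w) ∈ T ∧
        (Gr (T.erase s(u, w))).Reachable w v) := by
      apply Finset.filter_congr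
      intro w _
      exact ⟨fun h => h.2, fun h => ⟨hT', h⟩⟩
    have hf2 : Finset.univ.filter (fun w => IsWTree ωs T ∧ s(u, w) ∈ T ∧
        (Gr (T.erase s(u, w))).Reachable u v)
        = Finset.univ.filter (fun w => s(u, w) ∈ T ∧
        (Gr (T.erase s(u, w))).Reachable u v) := by
      apply Finset.filter_congr
      intro w _
      exact ⟨fun h => h.2, fun h => ⟨hT', h⟩⟩
    rw [hf1, hf2, ← Finset.sum_mul, ← Finset.sum_mul, ← sub_mul]
    have := tree_identity hT' hloop huv
    simp only [volA]
    rw [this]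
  rw [Finset.sum_congr rfl hper, ← Finset.mul_sum]
  rfl

lemma split_U (hnn : ∀ e, 0 ≤ ωs e) (w : V) :
    Sval ωs v u =
      (∑ E ∈ Finset.univ.filter (fun E => Sep ωs u v E ∧ (Gr E).Reachable w u),
        volA ωs E u * wgt ωs E)
      + ∑ E ∈ Finset.univ.filter (fun E => Sep ωs u v E ∧ (Gr E).Reachable w v),
        volA ωs E u * wgt ωs E := by
  have hsplit := Finset.sum_filter_add_sum_filter_not
    (Finset.univ.filter (fun E => Sep ωs u v E)) (fun E => (Gr E).Reachable w u)
    (fun E => volA ωs E u * wgt ωs E)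
  rw [Finset.filter_filter, Finset.filter_filter] at hsplit
  have hneg : Finset.univ.filter (fun E => Sep ωs u v E ∧ ¬(Gr E).Reachable w u)
      = Finset.univ.filter (fun E => Sep ωs u v E ∧ (Gr E).Reachable w v) := by
    ext E
    rw [Finset.mem_filter, Finset.mem_filter]
    constructor
    · rintro ⟨h1, hsep, hnwu⟩
      rcases hsep.2.2.2 w with h | h
      · exact absurd h hnwu
      · exact ⟨h1, hsep, h⟩
    · rintro ⟨h1, hsep, hwv⟩
      refine ⟨h1, hsep, fun hwu => ?_⟩
      exact hsep.2.2.1 (hwu.symm.trans hwv)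
  rw [hneg] at hsplit
  exact hsplit.symm

lemma split_W (hnn : ∀ e, 0 ≤ ωs e) (w : V) :
    Sval ωs v w =
      (∑ E ∈ Finset.univ.filter (fun E => Sep ωs w v E ∧ (Gr E).Reachable u w),
        volA ωs E w * wgt ωs E)
      + ∑ E ∈ Finset.univ.filter (fun E => Sep ωs w v E ∧ (Gr E).Reachable u v),
        volA ωs E w * wgt ωs E := by
  have hsplit := Finset.sum_filter_add_sum_filter_not
    (Finset.univ.filter (fun E => Sep ωs w v E)) (fun E => (Gr E).Reachable u w)
    (fun E => volA ωs E w * wgt ωs E)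
  rw [Finset.filter_filter, Finset.filter_filter] at hsplit
  have hneg : Finset.univ.filter (fun E => Sep ωs w v E ∧ ¬(Gr E).Reachable u w)
      = Finset.univ.filter (fun E => Sep ωs w v E ∧ (Gr E).Reachable u v) := by
    ext E
    rw [Finset.mem_filter, Finset.mem_filter]
    constructor
    · rintro ⟨h1, hsep, hnuw⟩
      rcases hsep.2.2.2 u with h | h
      · exact absurd h hnuw
      · exact ⟨h1, hsep, h⟩
    · rintro ⟨h1, hsep, huv'⟩
      refine ⟨h1, hsep, fun huw => ?_⟩
      exact hsep.2.2.1 (huw.symm.trans huv')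
  rw [hneg] at hsplit
  exact hsplit.symm

lemma main_identity (hnn : ∀ e, 0 ≤ ωs e) (hloop : ∀ x : V, ωs s(x, x) = 0)
    (huv : u ≠ v) :
    degS ωs u * Sval ωs v u = degS ωs u * tauW ωs + ∑ w, ωs s(u, w) * Sval ωs v w := by
  have hA : ∀ w : V, ωs s(u, w) *
      (∑ E ∈ Finset.univ.filter (fun E => Sep ωs u v E ∧ (Gr E).Reachable w u),
        volA ωs E u * wgt ωs E)
      = ωs s(u, w) *
      (∑ E ∈ Finset.univ.filter (fun E => Sep ωs w v E ∧ (Gr E).Reachable u w),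
        volA ωs E w * wgt ωs E) := by
    intro w
    rw [AC_eq]
  have h1 : degS ωs u * Sval ωs v u = ∑ w, ωs s(u, w) * Sval ωs v u := by
    rw [degS, Finset.sum_mul]
  have h2 : ∑ w, ωs s(u, w) * Sval ωs v u
      = (∑ w, ωs s(u, w) *
          (∑ E ∈ Finset.univ.filter (fun E => Sep ωs u v E ∧ (Gr E).Reachable w u),
            volA ωs E u * wgt ωs E))
        + ∑ w, ωs s(u, w) *
          (∑ E ∈ Finset.univ.filter (fun E => Sep ωs u v E ∧ (Gr E).Reachable w v),
            volA ωs E u * wgt ωs E) := by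
    rw [← Finset.sum_add_distrib]
    refine Finset.sum_congr rfl fun w _ => ?_
    rw [split_U hnn w, mul_add]
  have h3 : ∑ w, ωs s(u, w) * Sval ωs v w
      = (∑ w, ωs s(u, w) *
          (∑ E ∈ Finset.univ.filter (fun E => Sep ωs w v E ∧ (Gr E).Reachable u w),
            volA ωs E w * wgt ωs E))
        + ∑ w, ωs s(u, w) *
          (∑ E ∈ Finset.univ.filter (fun E => Sep ωs w v E ∧ (Gr E).Reachable u v),
            volA ωs E w * wgt ωs E) := by
    rw [← Finset.sum_add_distrib]
    refine Finset.sum_congr rfl fun w _ => ?_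
    rw [split_W hnn w, mul_add]
  have hB : ∑ w, ωs s(u, w) *
      (∑ E ∈ Finset.univ.filter (fun E => Sep ωs u v E ∧ (Gr E).Reachable w v),
        volA ωs E u * wgt ωs E)
      = ∑ w, ∑ T ∈ Finset.univ.filter (fun T => IsWTree ωs T ∧ s(u, w) ∈ T ∧
          (Gr (T.erase s(u, w))).Reachable w v), volA ωs (T.erase s(u, w)) u * wgt ωs T :=
    Finset.sum_congr rfl fun w _ => bij_B hnn hloop w
  have hD : ∑ w, ωs s(u, w) *
      (∑ E ∈ Finset.univ.filter (fun E => Sep ωs w v E ∧ (Gr E).Reachable u v),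
        volA ωs E w * wgt ωs E)
      = ∑ w, ∑ T ∈ Finset.univ.filter (fun T => IsWTree ωs T ∧ s(u, w) ∈ T ∧
          (Gr (T.erase s(u, w))).Reachable u v), volA ωs (T.erase s(u, w)) w * wgt ωs T :=
    Finset.sum_congr rfl fun w _ => bij_D hnn hloop w
  have hAC : ∑ w, ωs s(u, w) *
      (∑ E ∈ Finset.univ.filter (fun E => Sep ωs u v E ∧ (Gr E).Reachable w u),
        volA ωs E u * wgt ωs E)
      = ∑ w, ωs s(u, w) *
      (∑ E ∈ Finset.univ.filter (fun E => Sep ωs w v E ∧ (Gr E).Reachable u w),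
        volA ωs E w * wgt ωs E) :=
    Finset.sum_congr rfl fun w _ => hA w
  have hkey := tree_double_sum (ωs := ωs) (u := u) (v := v) hloop huv
  linarith [h1, h2, h3, hB, hD, hAC, hkey]






lemma prune (ωs : Sym2 V → ℝ) :
    ∀ E : Finset (Sym2 V), (∀ e ∈ E, 0 < ωs e) → (Gr E).Connected →
      ∃ E', IsWTree ωs E' := by
  intro E
  induction E using Finset.strongInduction with
  | _ E ih =>
    intro hpos hconn
    by_cases hac : (Gr E).IsAcyclic
    · exact ⟨E, hpos, hac, hconn⟩
    · rw [SimpleGraph.IsAcyclic] at hac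
      push_neg at hac
      obtain ⟨x, c, hc⟩ := hac
      obtain ⟨e, he⟩ : ∃ e, e ∈ c.edges := by
        cases hce : c.edges with
        | nil =>
          exfalso
          have h3 := hc.three_le_length
          have := c.length_edges
          rw [hce] at this
          simp at this
          omega
        | cons a l => exact ⟨a, by simp [hce]⟩
      induction e using Sym2.ind with
      | _ a b =>
        have heset := c.edges_subset_edgeSet he
        have hadj : (Gr E).Adj a b := (Gr E).mem_edgeSet.mp heset
        have hmemE : s(a, b) ∈ E := (Gr_adj.mp hadj).1
        have hreach : (Gr E \ SimpleGraph.fromEdgeSet {s(a, b)}).Reachable a b :=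
          (SimpleGraph.adj_and_reachable_delete_edges_iff_exists_cycle.mpr ⟨x, c, hc, he⟩).2
        rw [← Gr_erase] at hreach
        have hconn' : (Gr (E.erase s(a, b))).Connected := by
          have : Nonempty V := hconn.nonempty
          exact ⟨fun p q => reach_of_reach_erase hreach (hconn.preconnected p q)⟩
        exact ih (E.erase s(a, b)) (Finset.erase_ssubset hmemE)
          (fun e he' => hpos e (Finset.mem_of_mem_erase he')) hconn'

lemma exists_tree (ωs : Sym2 V → ℝ) [Nonempty V]
    (hconn : ∀ a b : V, Relation.ReflTransGen (fun a b => 0 < ωs s(a, b)) a b) :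
    ∃ E, IsWTree ωs E := by
  set E₀ : Finset (Sym2 V) := Finset.univ.filter (fun e => 0 < ωs e ∧ ¬ e.IsDiag) with hE₀
  have hpos : ∀ e ∈ E₀, 0 < ωs e := fun e he => (Finset.mem_filter.mp he).2.1
  have hconn' : (Gr E₀).Connected := by
    refine ⟨fun x y => ?_⟩
    induction hconn x y with
    | refl => exact SimpleGraph.Reachable.refl _
    | @tail b c hab hbc ih =>
      by_cases hbceq : b = c
      · exact hbceq ▸ ih
      · have hadj : (Gr E₀).Adj b c := by
          rw [Gr_adj]
          refine ⟨Finset.mem_filter.mpr ⟨Finset.mem_univ _, hbc, ?_⟩, hbceq⟩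
          rw [Sym2.mk_isDiag_iff]
          exact hbceq
        exact ih.trans hadj.reachable
  exact prune ωs E₀ hpos hconn'

lemma tau_pos (ωs : Sym2 V → ℝ) [Nonempty V]
    (hconn : ∀ a b : V, Relation.ReflTransGen (fun a b => 0 < ωs s(a, b)) a b) :
    0 < tauW ωs := by
  apply Finset.sum_pos
  · intro E hE
    have hpos := (Finset.mem_filter.mp hE).2.1
    exact Finset.prod_pos hpos
  · obtain ⟨E, hE⟩ := exists_tree ωs hconn
    exact ⟨E, Finset.mem_filter.mpr ⟨Finset.mem_univ _, hE⟩⟩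

lemma deg_pos {ωs : Sym2 V → ℝ} (hnn : ∀ e, 0 ≤ ωs e) {x y : V} (hxy : x ≠ y)
    (h : Relation.ReflTransGen (fun a b => 0 < ωs s(a, b)) x y) :
    0 < degS ωs x := by
  rcases h.cases_head with rfl | ⟨c, hxc, -⟩
  · exact absurd rfl hxy
  · apply Finset.sum_pos'
    · intro w _
      exact hnn _
    · exact ⟨c, Finset.mem_univ _, hxc⟩

lemma max_principle {ωs : Sym2 V → ℝ} (hnn : ∀ e, 0 ≤ ωs e)
    (hconn : ∀ a b : V, Relation.ReflTransGen (fun a b => 0 < ωs s(a, b)) a b)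
    (hd : ∀ x : V, 0 < degS ωs x) (v : V) (h : V → ℝ) (hv : h v = 0)
    (hrec : ∀ x, x ≠ v → h x = ∑ w, (ωs s(x, w) / degS ωs x) * h w) :
    ∀ x, h x ≤ 0 := by
  have hne : (Finset.univ : Finset V).Nonempty := ⟨v, Finset.mem_univ v⟩
  obtain ⟨x₀, -, hx₀⟩ := Finset.exists_max_image Finset.univ h hne
  set M := h x₀ with hM
  have hle : ∀ x : V, h x ≤ M := fun x => hx₀ x (Finset.mem_univ x)
  have hstep : ∀ x, h x = M → x ≠ v → ∀ w, 0 < ωs s(x, w) → h w = M := by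
    intro x hxM hxv w hw
    have hdx := hd x
    have hsum1 : ∑ w, ωs s(x, w) / degS ωs x = 1 := by
      rw [← Finset.sum_div, ← degS, div_self (ne_of_gt hdx)]
    have hzero : ∑ w, (ωs s(x, w) / degS ωs x) * (M - h w) = 0 := by
      have hexp : ∑ w, (ωs s(x, w) / degS ωs x) * (M - h w)
          = (∑ w, ωs s(x, w) / degS ωs x) * M
            - ∑ w, (ωs s(x, w) / degS ωs x) * h w := by
        rw [Finset.sum_mul, ← Finset.sum_sub_distrib]
        refine Finset.sum_congr rfl fun w _ => ?_
        ring
      rw [hexp, hsum1, one_mul, ← hrec x hxv, hxM]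
      ring
    have hterm : ∀ w ∈ Finset.univ, 0 ≤ (ωs s(x, w) / degS ωs x) * (M - h w) := by
      intro w _
      apply mul_nonneg (div_nonneg (hnn _) (le_of_lt hdx))
      linarith [hle w]
    have := (Finset.sum_eq_zero_iff_of_nonneg hterm).mp hzero w (Finset.mem_univ w)
    have hp : 0 < ωs s(x, w) / degS ωs x := div_pos hw hdx
    have : M - h w = 0 := by
      by_contra hne'
      exact hne' (by
        have := mul_eq_zero.mp this
        rcases this with h' | h'
        · exact absurd h' (ne_of_gt hp)
        · exact h')
    linarith
  have hprop : ∀ x, Relation.ReflTransGen (fun a b => 0 < ωs s(a, b)) x v →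
      h x = M → M ≤ 0 := by
    intro x hx
    induction hx using Relation.ReflTransGen.head_induction_on with
    | refl => intro hxv; rw [← hv, hxv]
    | @head a c hac hcv ih =>
      intro haM
      by_cases hav : a = v
      · rw [hav] at haM; rw [← hv, haM]
      · exact ih (hstep a haM hav c hac)
  intro x
  exact (hle x).trans (hprop x₀ (hconn x₀ v) rfl)


/-- **Forest formula for the hitting time of a connected weighted undirected graph.**
The sum is over spanning 2-forests separating `u` from `v`; `vol(T₂)` is the volume
of the component containing `u`. -/
theorem hitting_time_forest_formula_undirected
    {V : Type*} [Fintype V] [DecidableEq V]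
    (ωs : Sym2 V → ℝ) (hnn : ∀ e, 0 ≤ ωs e) (hloop : ∀ v : V, ωs s(v, v) = 0)
    (hconn : ConnectedW ωs)
    (H : V → V → ℝ) (hH0 : ∀ v, H v v = 0)
    (hHrec : ∀ u v, u ≠ v → H u v = 1 + ∑ w, (ωs s(u, w) / degS ωs u) * H w v)
    (u v : V) :
    H u v = (1 / tauW ωs) * ∑ E ∈ Finset.univ.filter (fun E : Finset (Sym2 V) =>
        IsWTwoForest ωs E ∧ ¬ (SimpleGraph.fromEdgeSet (E : Set (Sym2 V))).Reachable u v),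
      (∑ z ∈ Finset.univ.filter (fun z : V =>
          (SimpleGraph.fromEdgeSet (E : Set (Sym2 V))).Reachable z u), degS ωs z) *
        wgt ωs E := by
  by_cases huv : u = v
  · subst huv
    rw [hH0]
    have hfe : Finset.univ.filter (fun E : Finset (Sym2 V) =>
        IsWTwoForest ωs E ∧ ¬ (SimpleGraph.fromEdgeSet (E : Set (Sym2 V))).Reachable u u)
        = ∅ := by
      apply Finset.eq_empty_of_forall_notMem
      intro E hE
      exact (Finset.mem_filter.mp hE).2.2 (SimpleGraph.Reachable.refl u)
    rw [hfe, Finset.sum_empty, mul_zero]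
  · have hNe : Nonempty V := ⟨u⟩
    have hconn' : ∀ a b : V, Relation.ReflTransGen (fun a b => 0 < ωs s(a, b)) a b := hconn
    have hτ : 0 < tauW ωs := tau_pos ωs hconn'
    have hτne : tauW ωs ≠ 0 := ne_of_gt hτ
    have hd : ∀ x : V, 0 < degS ωs x := by
      intro x
      by_cases hx : x = v
      · have hxu : x ≠ u := by rw [hx]; exact Ne.symm huv
        exact deg_pos hnn hxu (hconn' x u)
      · exact deg_pos hnn hx (hconn' x v)
    have hSrec : ∀ x, x ≠ v → (1 / tauW ωs) * Sval ωs v x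
        = 1 + ∑ w, (ωs s(x, w) / degS ωs x) * ((1 / tauW ωs) * Sval ωs v w) := by
      intro x hx
      have hdx := hd x
      have hdxne : degS ωs x ≠ 0 := ne_of_gt hdx
      have hiden := main_identity (v := v) hnn hloop hx
      have h1 : ∑ w, (ωs s(x, w) / degS ωs x) * ((1 / tauW ωs) * Sval ωs v w)
          = (∑ w, ωs s(x, w) * Sval ωs v w) / (degS ωs x * tauW ωs) := by
        rw [Finset.sum_div]
        refine Finset.sum_congr rfl fun w _ => ?_
        field_simp
      rw [h1]
      have h2 : ∑ w, ωs s(x, w) * Sval ωs v w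
          = degS ωs x * Sval ωs v x - degS ωs x * tauW ωs := by linarith
      rw [h2]
      field_simp
      ring
    have hSv : Sval ωs v v = 0 := by
      unfold Sval
      have hemp : Finset.univ.filter (fun E => Sep ωs v v E) = ∅ := by
        apply Finset.eq_empty_of_forall_notMem
        intro E hE
        exact (Finset.mem_filter.mp hE).2.2.2.1 (SimpleGraph.Reachable.refl v)
      rw [hemp, Finset.sum_empty]
    have hgrec : ∀ x, x ≠ v →
        (H x v - (1 / tauW ωs) * Sval ωs v x)
        = ∑ w, (ωs s(x, w) / degS ωs x) *
            (H w v - (1 / tauW ωs) * Sval ωs v w) := by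
      intro x hx
      have hH := hHrec x v hx
      have hS' := hSrec x hx
      have hsplit : ∑ w, (ωs s(x, w) / degS ωs x) *
            (H w v - (1 / tauW ωs) * Sval ωs v w)
          = (∑ w, (ωs s(x, w) / degS ωs x) * H w v)
            - ∑ w, (ωs s(x, w) / degS ωs x) * ((1 / tauW ωs) * Sval ωs v w) := by
        rw [← Finset.sum_sub_distrib]
        refine Finset.sum_congr rfl fun w _ => ?_
        ring
      rw [hsplit]
      linarith
    have hg1 := max_principle hnn hconn' hd v
      (fun x => H x v - (1 / tauW ωs) * Sval ωs v x)
      (by simp [hH0 v, hSv]) (fun x hx => hgrec x hx)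
    have hg2 := max_principle hnn hconn' hd v
      (fun x => -(H x v - (1 / tauW ωs) * Sval ωs v x))
      (by simp [hH0 v, hSv]) (fun x hx => by
        have := hgrec x hx
        rw [this, ← Finset.sum_neg_distrib]
        exact Finset.sum_congr rfl fun w _ => by ring)
    have h1 := hg1 u
    have h2 := hg2 u
    have hHu : H u v = (1 / tauW ωs) * Sval ωs v u := by linarith
    rw [hHu]
    congr 1
    unfold Sval
    have hfil : Finset.univ.filter (fun E => Sep ωs u v E)
        = Finset.univ.filter (fun E : Finset (Sym2 V) => IsWTwoForest ωs E ∧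
            ¬ (SimpleGraph.fromEdgeSet (E : Set (Sym2 V))).Reachable u v) := by
      ext E
      rw [Finset.mem_filter, Finset.mem_filter]
      constructor
      · rintro ⟨h1', h2'⟩
        exact ⟨h1', (sep_iff ωs huv E).mpr h2'⟩
      · rintro ⟨h1', h2'⟩
        exact ⟨h1', (sep_iff ωs huv E).mp h2'⟩
    rw [hfil]
    refine Finset.sum_congr rfl fun E _ => ?_
    unfold volA Gr
    congr


end Paper
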